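/- Comparison theorem for profiles under weak moments: if φ is a symmetric probability measure on a finitely generated group G with W(ρ,φ) ≤ K, then for every v > 0, p ∈ [1,∞), and every s > 0, Λ_{p,φ}(v) ≤ C(p,ρ)·K·(1/ρ(s) + |S*|·s^p/M_{p,ρ}(s) · Λ_{p,u}(v)), where M_{p,ρ}(t) = t^p/∫₀^t s^{p−1}/ρ(s) ds and u is the uniform measure on the generating set S*. -/

import Mathlib

open scoped BigOperators

/-- A symmetric probability measure on a group. -/
def IsSymProb {G : Type*} [Group G] (φ : G → ℝ) : Prop :=
  (∀ x, 0 ≤ φ x) ∧ (∑' x, φ x) = 1 ∧ ∀ x, φ x⁻¹ = φ x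

/-- Word length with respect to a finite symmetric generating set `S`. -/
noncomputable def wordLength {G : Type*} [Group G] (S : Finset G) (g : G) : ℕ :=
  sInf {n : ℕ | ∃ l : List G, (∀ x ∈ l, x ∈ S) ∧ l.length = n ∧ l.prod = g}

/-- The uniform probability measure on the generating set `S`. -/
noncomputable def unifS {G : Type*} [Group G] [DecidableEq G] (S : Finset G) : G → ℝ :=
  fun y => if y ∈ S then ((S.card : ℝ))⁻¹ else 0

/-- The `L^p` isoperimetric profile. -/
noncomputable def lambdaP {G : Type*} [Group G] (p : ℝ) (φ : G → ℝ) (v : ℝ) : ℝ :=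
  sInf {E : ℝ | ∃ f : G → ℝ, (Function.support f).Finite ∧
    ((Function.support f).ncard : ℝ) ≤ v ∧ (∑' x, |f x| ^ p) = 1 ∧
    E = (1 / 2) * ∑' x : G, ∑' y : G, |f (x * y) - f x| ^ p * φ y}


/-- n-ary power mean inequality: `(∑ a)^p ≤ card^(p-1) * ∑ a^p`. -/
lemma aux_sum_rpow_le {ι : Type*} (t : Finset ι) (a : ι → ℝ) (ha : ∀ i ∈ t, 0 ≤ a i)
    {p : ℝ} (hp : 1 ≤ p) :
    (∑ i ∈ t, a i) ^ p ≤ (t.card : ℝ) ^ (p - 1) * ∑ i ∈ t, a i ^ p := by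
  rcases t.eq_empty_or_nonempty with rfl | ht
  · simp only [Finset.sum_empty, mul_zero]
    rw [Real.zero_rpow (by positivity)]
  · have hcard : (0:ℝ) < t.card := by exact_mod_cast Finset.card_pos.mpr ht
    have hw : ∑ _i ∈ t, ((t.card : ℝ))⁻¹ = 1 := by
      rw [Finset.sum_const, nsmul_eq_mul, mul_inv_cancel₀ (ne_of_gt hcard)]
    have h := Real.rpow_arith_mean_le_arith_mean_rpow t (fun _ => ((t.card : ℝ))⁻¹)
      (fun i => (t.card : ℝ) * a i) (fun i _ => by positivity) hw
      (fun i hi => by have := ha i hi; positivity) hp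
    have hL : ∑ i ∈ t, ((t.card : ℝ))⁻¹ * ((t.card : ℝ) * a i) = ∑ i ∈ t, a i := by
      refine Finset.sum_congr rfl fun i hi => ?_
      field_simp
    rw [hL] at h
    refine h.trans (le_of_eq ?_)
    rw [Finset.mul_sum]
    refine Finset.sum_congr rfl fun i hi => ?_
    rw [Real.mul_rpow (le_of_lt hcard) (ha i hi)]
    rw [Real.rpow_sub_one (ne_of_gt hcard)]
    ring

/-- two-point version with absolute values. -/
lemma aux_abs_sub_rpow_le {p : ℝ} (hp : 1 ≤ p) (a b : ℝ) :
    |a - b| ^ p ≤ 2 ^ (p - 1) * (|a| ^ p + |b| ^ p) := by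
  have h1 : |a - b| ^ p ≤ (|a| + |b|) ^ p :=
    Real.rpow_le_rpow (abs_nonneg _) (abs_sub a b) (by linarith)
  refine h1.trans ?_
  have h2 := aux_sum_rpow_le (Finset.univ : Finset (Fin 2)) ![|a|, |b|]
    (fun i _ => by fin_cases i <;> simp [abs_nonneg]) hp
  simpa [Fin.sum_univ_two] using h2

/-- `2^(p-1) * 2 = 2^p` -/
lemma aux_two_rpow (p : ℝ) : (2:ℝ) ^ (p - 1) * 2 = 2 ^ p := by
  rw [Real.rpow_sub_one (by norm_num : (2:ℝ) ≠ 0)]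
  field_simp

lemma aux_limit_le {m c K : ℝ} (hm : 0 ≤ m) (hc : 0 < c) (hK : 0 ≤ K)
    (h : ∀ t, 0 < t → t < c → m * t ≤ K) : m ≤ K / c := by
  rw [le_div_iff₀ hc]
  by_contra hcon
  push_neg at hcon
  have hm' : 0 < m := by
    rcases lt_or_eq_of_le hm with h' | h'
    · exact h'
    · exfalso; rw [← h'] at hcon; simp at hcon; linarith
  have h1 : K / m < c := by rw [div_lt_iff₀ hm']; linarith [mul_comm c m]
  set t := (K / m + c) / 2 with ht
  have ht1 : 0 < t := by positivity
  have ht2 : t < c := by rw [ht]; linarith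
  have ht3 : K / m < t := by rw [ht]; linarith
  have := h t ht1 ht2
  have : K < m * t := by
    calc K = m * (K / m) := by field_simp
    _ < m * t := by exact mul_lt_mul_of_pos_left ht3 hm'
  linarith [h t ht1 ht2]

variable {G : Type} [Group G]

/-- shear equivalence on G × G -/
def aux_shear (G : Type) [Group G] : G × G ≃ G × G where
  toFun z := (z.1 * z.2, z.2)
  invFun z := (z.1 * z.2⁻¹, z.2)
  left_inv z := by simp
  right_inv z := by simp

lemma aux_tsum_translate (h : G → ℝ) (w : G) : ∑' x, h (x * w) = ∑' x, h x :=
  (Equiv.mulRight w).tsum_eq h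

lemma aux_summable_translate {h : G → ℝ} (hs : Summable h) (w : G) :
    Summable (fun x => h (x * w)) :=
  ((Equiv.mulRight w).summable_iff).mpr hs

section

variable {p : ℝ} (hp : 1 ≤ p) {f : G → ℝ} (hf : (Function.support f).Finite)

include hp hf

omit [Group G] in
/-- summability of `x ↦ |f x|^p` -/
lemma aux_summable_rpow : Summable (fun x => |f x| ^ p) := by
  refine summable_of_ne_finset_zero (s := hf.toFinset) fun x hx => ?_
  have : f x = 0 := by
    by_contra h
    exact hx (hf.mem_toFinset.mpr h)
  rw [this, abs_zero, Real.zero_rpow (by positivity)]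

/-- summability of `x ↦ |f (x*y) - f x|^p` for fixed `y` -/
lemma aux_summable_diff (y : G) : Summable (fun x => |f (x * y) - f x| ^ p) := by
  classical
  refine summable_of_ne_finset_zero
    (s := hf.toFinset ∪ hf.toFinset.image (· * y⁻¹)) fun x hx => ?_
  simp only [Finset.mem_union, Finset.mem_image, not_or, not_exists] at hx
  have h1 : f x = 0 := by
    by_contra h; exact hx.1 (hf.mem_toFinset.mpr h)
  have h2 : f (x * y) = 0 := by
    by_contra h
    have hmem : x * y ∈ hf.toFinset := hf.mem_toFinset.mpr h
    have := hx.2 (x * y)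
    rw [not_and] at this
    exact this hmem (by group)
  rw [h1, h2, sub_zero, abs_zero, Real.zero_rpow (by positivity)]

/-- summability of the uncurried energy summand -/
lemma aux_summable_uncurry {μ : G → ℝ} (hμ0 : ∀ y, 0 ≤ μ y) (hμs : Summable μ) :
    Summable (fun z : G × G => |f (z.1 * z.2) - f z.1| ^ p * μ z.2) := by
  have hfs : Summable (fun x => |f x| ^ p) := aux_summable_rpow hp hf
  have hS1 : Summable (fun z : G × G => |f z.1| ^ p * μ z.2) :=
    hfs.mul_of_nonneg hμs (by intro x; positivity) hμ0
  have hS2 : Summable (fun z : G × G => |f (z.1 * z.2)| ^ p * μ z.2) := by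
    have := ((aux_shear G).summable_iff).mpr hS1
    simpa [aux_shear, Function.comp_def] using this
  have hS3 : Summable (fun z : G × G =>
      (2:ℝ) ^ (p - 1) * (|f (z.1 * z.2)| ^ p * μ z.2 + |f z.1| ^ p * μ z.2)) :=
    ((hS2.add hS1).mul_left _)
  refine hS3.of_nonneg_of_le (fun z => mul_nonneg (Real.rpow_nonneg (abs_nonneg _) _) (hμ0 _)) (fun z => ?_)
  calc |f (z.1 * z.2) - f z.1| ^ p * μ z.2
      ≤ (2:ℝ) ^ (p - 1) * (|f (z.1 * z.2)| ^ p + |f z.1| ^ p) * μ z.2 :=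
        mul_le_mul_of_nonneg_right (aux_abs_sub_rpow_le hp _ _) (hμ0 _)
    _ = (2:ℝ) ^ (p - 1) * (|f (z.1 * z.2)| ^ p * μ z.2 + |f z.1| ^ p * μ z.2) := by ring

/-- swapping the two sums in the energy -/
lemma aux_energy_swap {μ : G → ℝ} (hμ0 : ∀ y, 0 ≤ μ y) (hμs : Summable μ) :
    ∑' x, ∑' y, |f (x * y) - f x| ^ p * μ y
      = ∑' y, (∑' x, |f (x * y) - f x| ^ p) * μ y := by
  have hq := aux_summable_uncurry hp hf hμ0 hμs
  have h := Summable.tsum_comm (f := fun y x => |f (x * y) - f x| ^ p * μ y)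
    (by
      have := ((Equiv.prodComm G G).summable_iff).mpr hq
      simpa [Function.uncurry_def, Equiv.prodComm, Function.comp_def] using this)
  exact h.trans (tsum_congr fun y => tsum_mul_right)

end

section WordLen

variable {G : Type} [Group G] (S : Finset G)

lemma aux_exists_word (hsymm : ∀ s ∈ S, s⁻¹ ∈ S)
    (hgen : Subgroup.closure (S : Set G) = ⊤) (y : G) :
    ∃ l : List G, (∀ x ∈ l, x ∈ S) ∧ l.prod = y := by
  have hy : y ∈ Subgroup.closure (S : Set G) := by rw [hgen]; trivial
  have hy' : y ∈ Submonoid.closure ((S : Set G) ∪ (S : Set G)⁻¹) := by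
    rw [← Subgroup.closure_toSubmonoid]; exact hy
  obtain ⟨l, hl, hprod⟩ := Submonoid.exists_list_of_mem_closure hy'
  refine ⟨l, fun x hx => ?_, hprod⟩
  rcases hl x hx with h | h
  · exact h
  · have : x⁻¹ ∈ S := Set.mem_inv.mp h
    simpa using hsymm _ this

lemma aux_exists_min_word (hsymm : ∀ s ∈ S, s⁻¹ ∈ S)
    (hgen : Subgroup.closure (S : Set G) = ⊤) (y : G) :
    ∃ l : List G, (∀ x ∈ l, x ∈ S) ∧ l.length = wordLength S y ∧ l.prod = y := by
  have hne : {n : ℕ | ∃ l : List G, (∀ x ∈ l, x ∈ S) ∧ l.length = n ∧ l.prod = y}.Nonempty := by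
    obtain ⟨l, hl, hprod⟩ := aux_exists_word S hsymm hgen y
    exact ⟨l.length, l, hl, rfl, hprod⟩
  have := Nat.sInf_mem hne
  obtain ⟨l, hl, hlen, hprod⟩ := this
  exact ⟨l, hl, hlen, hprod⟩

lemma aux_wordLength_pos (hsymm : ∀ s ∈ S, s⁻¹ ∈ S)
    (hgen : Subgroup.closure (S : Set G) = ⊤) {y : G} (hy : y ≠ 1) :
    1 ≤ wordLength S y := by
  by_contra h
  push_neg at h
  interval_cases h' : wordLength S y
  · rw [wordLength] at h'
    rcases (Nat.sInf_eq_zero.mp h') with h0 | h0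
    · obtain ⟨l, _, hlen, hprod⟩ := h0
      rw [List.length_eq_zero_iff] at hlen
      subst hlen
      simp at hprod
      exact hy hprod.symm
    · have hne : {n : ℕ | ∃ l : List G, (∀ x ∈ l, x ∈ S) ∧ l.length = n ∧ l.prod = y}.Nonempty := by
        obtain ⟨l, hl, hprod⟩ := aux_exists_word S hsymm hgen y
        exact ⟨l.length, l, hl, rfl, hprod⟩
      rw [h0] at hne
      exact Set.not_nonempty_empty hne

end WordLen

section Telescope

variable {G : Type} [Group G] {p : ℝ} (hp : 1 ≤ p) {f : G → ℝ}
  (hf : (Function.support f).Finite)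

include hp hf

lemma aux_g_le_two_rpow (hnorm : ∑' x, |f x| ^ p = 1) (y : G) :
    ∑' x, |f (x * y) - f x| ^ p ≤ 2 ^ p := by
  have hfs := aux_summable_rpow hp hf
  have hft : Summable (fun x => |f (x * y)| ^ p) := aux_summable_translate hfs y
  have hmaj : Summable (fun x => (2:ℝ) ^ (p-1) * (|f (x * y)| ^ p + |f x| ^ p)) :=
    (hft.add hfs).mul_left _
  have h := Summable.tsum_le_tsum (fun x => aux_abs_sub_rpow_le hp (f (x*y)) (f x))
    (aux_summable_diff hp hf y) hmaj
  refine h.trans ?_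
  rw [tsum_mul_left, Summable.tsum_add hft hfs, aux_tsum_translate (fun x => |f x| ^ p) y, hnorm]
  rw [show (1:ℝ) + 1 = 2 by norm_num, aux_two_rpow]

lemma aux_g_telescope (S : Finset G) (l : List G) (hl : ∀ z ∈ l, z ∈ S) :
    ∑' x, |f (x * l.prod) - f x| ^ p
      ≤ (l.length : ℝ) ^ p * ∑ z ∈ S, ∑' x, |f (x * z) - f x| ^ p := by
  set T := ∑ z ∈ S, ∑' x, |f (x * z) - f x| ^ p with hT
  have hT0 : 0 ≤ T :=
    Finset.sum_nonneg fun z _ => tsum_nonneg fun x => by positivity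
  set n := l.length with hn
  rcases Nat.eq_zero_or_pos n with h0 | hpos
  · have : l = [] := List.length_eq_zero_iff.mp h0
    subst this
    simp only [List.prod_nil, mul_one, sub_self, abs_zero]
    rw [Real.zero_rpow (by positivity), tsum_zero]
    positivity
  · set d : ℕ → G → ℝ :=
      fun i x => |f (x * (l.take (i+1)).prod) - f (x * (l.take i).prod)| ^ p with hd
    have key : ∀ i, i < n → Summable (d i) ∧ ∑' x, d i x ≤ T := by
      intro i hi
      have hz : l[i] ∈ S := hl _ (List.getElem_mem hi)
      have hrw : d i = fun x => |f ((x * (l.take i).prod) * l[i]) - f (x * (l.take i).prod)| ^ p := by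
        funext x
        simp only [hd]
        rw [List.prod_take_succ _ _ hi, ← mul_assoc]
      constructor
      · rw [hrw]
        exact aux_summable_translate (aux_summable_diff hp hf l[i]) _
      · rw [hrw, aux_tsum_translate (fun x' => |f (x' * l[i]) - f x'| ^ p) ((l.take i).prod)]
        exact Finset.single_le_sum (f := fun z => ∑' x, |f (x * z) - f x| ^ p)
          (fun z _ => tsum_nonneg fun x => by positivity) hz
    have hpt : ∀ x, |f (x * l.prod) - f x| ^ p
        ≤ (n : ℝ) ^ (p - 1) * ∑ i ∈ Finset.range n, d i x := by
      intro x
      have htel : ∑ i ∈ Finset.range n, (f (x * (l.take (i+1)).prod) - f (x * (l.take i).prod))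
          = f (x * l.prod) - f x := by
        rw [Finset.sum_range_sub (f := fun i => f (x * (l.take i).prod))]
        simp [hn, List.take_length]
      have habs : |f (x * l.prod) - f x| ≤ ∑ i ∈ Finset.range n, |f (x * (l.take (i+1)).prod) - f (x * (l.take i).prod)| := by
        rw [← htel]
        exact Finset.abs_sum_le_sum_abs _ _
      have h1 : |f (x * l.prod) - f x| ^ p
          ≤ (∑ i ∈ Finset.range n, |f (x * (l.take (i+1)).prod) - f (x * (l.take i).prod)|) ^ p :=
        Real.rpow_le_rpow (abs_nonneg _) habs (by linarith)
      refine h1.trans ?_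
      have h2 := aux_sum_rpow_le (Finset.range n)
        (fun i => |f (x * (l.take (i+1)).prod) - f (x * (l.take i).prod)|)
        (fun i _ => abs_nonneg _) hp
      simpa [hd, Finset.card_range] using h2
    have hsum_summ : Summable (fun x => (n : ℝ) ^ (p - 1) * ∑ i ∈ Finset.range n, d i x) :=
      (summable_sum (fun i hi => (key i (Finset.mem_range.mp hi)).1)).mul_left _
    have h3 := Summable.tsum_le_tsum hpt (aux_summable_diff hp hf l.prod) hsum_summ
    refine h3.trans ?_
    rw [tsum_mul_left, Summable.tsum_finsetSum (fun i hi => (key i (Finset.mem_range.mp hi)).1)]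
    have h4 : ∑ i ∈ Finset.range n, ∑' x, d i x ≤ n * T := by
      calc ∑ i ∈ Finset.range n, ∑' x, d i x ≤ ∑ _i ∈ Finset.range n, T :=
            Finset.sum_le_sum fun i hi => (key i (Finset.mem_range.mp hi)).2
        _ = n * T := by rw [Finset.sum_const, Finset.card_range, nsmul_eq_mul]
    have hnpos : (0:ℝ) < (n:ℝ) := by exact_mod_cast hpos
    calc (n : ℝ) ^ (p - 1) * ∑ i ∈ Finset.range n, ∑' x, d i x
        ≤ (n : ℝ) ^ (p - 1) * (n * T) := by
          apply mul_le_mul_of_nonneg_left h4 (Real.rpow_nonneg hnpos.le _)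
      _ = (n : ℝ) ^ p * T := by
          rw [Real.rpow_sub_one (ne_of_gt hnpos)]
          field_simp
end Telescope

section Tail

variable {G : Type} [Group G]

lemma aux_tail_mass (S : Finset G) {ρ : ℝ → ℝ} (hρmono : MonotoneOn ρ (Set.Ici 0))
    (hρ1 : ∀ t ≥ (0:ℝ), 1 ≤ ρ t) {φ : G → ℝ} (hφ0 : ∀ x, 0 ≤ φ x) (hφs : Summable φ)
    {K : ℝ} (hK : 0 < K)
    (hmom : ∀ t > (0:ℝ),
      t * ∑' x : G, ({x : G | t < ρ ((wordLength S x : ℝ))}).indicator φ x ≤ K)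
    {a : ℝ} (ha : 0 < a) :
    ∑' x : G, ({x : G | a < (wordLength S x : ℝ)}).indicator φ x ≤ K / ρ a := by
  have hρa : 0 < ρ a := lt_of_lt_of_le one_pos (hρ1 a ha.le)
  refine aux_limit_le (tsum_nonneg fun x => Set.indicator_nonneg (fun y _ => hφ0 y) x)
    hρa hK.le (fun t ht htc => ?_)
  have hsub : {x : G | a < (wordLength S x : ℝ)} ⊆ {x : G | t < ρ ((wordLength S x : ℝ))} := by
    intro x hx
    simp only [Set.mem_setOf_eq] at hx ⊢
    have hwl : (0:ℝ) ≤ (wordLength S x : ℝ) := Nat.cast_nonneg _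
    have : ρ a ≤ ρ ((wordLength S x : ℝ)) := hρmono ha.le hwl hx.le
    linarith
  have hmono := Summable.tsum_le_tsum
    (Set.indicator_le_indicator_of_subset hsub (fun y => hφ0 y))
    (hφs.indicator _) (hφs.indicator _)
  calc (∑' x : G, ({x : G | a < (wordLength S x : ℝ)}).indicator φ x) * t
      = t * ∑' x : G, ({x : G | a < (wordLength S x : ℝ)}).indicator φ x := mul_comm _ _
    _ ≤ t * ∑' x : G, ({x : G | t < ρ ((wordLength S x : ℝ))}).indicator φ x :=
        mul_le_mul_of_nonneg_left hmono ht.le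
    _ ≤ K := hmom t ht

end Tail

section Integral

open intervalIntegral MeasureTheory

variable {p : ℝ} (hp : 1 ≤ p) {ρ : ℝ → ℝ} (hρcont : ContinuousOn ρ (Set.Ici 0))
  (hρ1 : ∀ t ≥ (0:ℝ), 1 ≤ ρ t)

include hp hρcont hρ1

lemma aux_integrable {a b : ℝ} (ha : 0 ≤ a) (hb : 0 ≤ b) :
    IntervalIntegrable (fun u : ℝ => u ^ (p - 1) / ρ u) volume a b := by
  apply ContinuousOn.intervalIntegrable
  have h0 : Set.uIcc a b ⊆ Set.Ici 0 := by
    intro x hx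
    have h1 := hx.1
    have : (0:ℝ) ≤ min a b := le_min ha hb
    exact le_trans (by simpa using this) h1
  apply ContinuousOn.div
  · intro x _
    exact (Real.continuousAt_rpow_const x (p - 1) (Or.inr (by linarith))).continuousWithinAt
  · exact hρcont.mono h0
  · intro x hx
    exact ne_of_gt (lt_of_lt_of_le one_pos (hρ1 x (h0 hx)))

lemma aux_I_pos {s : ℝ} (hs : 0 < s) :
    0 < ∫ u in (0:ℝ)..s, u ^ (p - 1) / ρ u := by
  refine intervalIntegral_pos_of_pos_on (aux_integrable hp hρcont hρ1 le_rfl hs.le)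
    (fun x hx => ?_) hs
  have hx0 : 0 < x := hx.1
  exact div_pos (Real.rpow_pos_of_pos hx0 _) (lt_of_lt_of_le one_pos (hρ1 x hx0.le))

lemma aux_geom_sum_le {s : ℝ} (hs : 0 < s) (hρmono : MonotoneOn ρ (Set.Ici 0)) (J : ℕ) :
    ∑ k ∈ Finset.range J, (s / 2 ^ (k + 2)) ^ p / ρ (s / 2 ^ (k + 1))
      ≤ ∫ u in (0:ℝ)..s, u ^ (p - 1) / ρ u := by
  set F : ℝ → ℝ := fun u => u ^ (p - 1) / ρ u with hF
  have hpos2 : ∀ k : ℕ, (0:ℝ) < s / 2 ^ k := fun k => by positivity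
  -- termwise bound by integral over the dyadic piece
  have key : ∀ k : ℕ, (s / 2 ^ (k + 2)) ^ p / ρ (s / 2 ^ (k + 1))
      ≤ ∫ u in (s / 2 ^ (k + 2))..(s / 2 ^ (k + 1)), F u := by
    intro k
    set a := s / 2 ^ (k + 2) with hadef
    set b := s / 2 ^ (k + 1) with hbdef
    have ha : 0 < a := hpos2 _
    have hb : 0 < b := hpos2 _
    have hab : a ≤ b := by
      apply div_le_div_of_nonneg_left hs.le (by positivity)
      exact pow_le_pow_right₀ (by norm_num) (by omega)
    have hba : b - a = a := by
      rw [hadef, hbdef]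
      rw [pow_succ]
      field_simp
      ring
    have hconst : ∀ u ∈ Set.Icc a b, a ^ (p - 1) / ρ b ≤ F u := by
      intro u hu
      have hu0 : 0 < u := lt_of_lt_of_le ha hu.1
      apply div_le_div₀ (Real.rpow_nonneg hu0.le _)
        (Real.rpow_le_rpow ha.le hu.1 (by linarith))
        (lt_of_lt_of_le one_pos (hρ1 u hu0.le))
        (hρmono hu0.le hb.le hu.2)
    have hint := intervalIntegral.integral_mono_on hab
      (_root_.intervalIntegrable_const (c := a ^ (p - 1) / ρ b))
      (aux_integrable hp hρcont hρ1 ha.le hb.le) hconst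
    rw [intervalIntegral.integral_const, smul_eq_mul, hba] at hint
    calc a ^ p / ρ b = a * (a ^ (p - 1) / ρ b) := by
          have hap : a ^ p = a ^ (p - 1) * a := by
            rw [← Real.rpow_add_one (ne_of_gt ha)]
            norm_num
          rw [hap]
          ring
      _ ≤ ∫ u in a..b, F u := hint
  -- sum the dyadic pieces
  have hadj : ∑ k ∈ Finset.range J, ∫ u in (s / 2 ^ (k + 1))..(s / 2 ^ (k + 2)), F u
      = ∫ u in (s / 2 ^ (0 + 1))..(s / 2 ^ (J + 1)), F u := by
    have := intervalIntegral.sum_integral_adjacent_intervals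
      (a := fun k => s / 2 ^ (k + 1)) (n := J) (μ := volume) (f := F)
      (fun k _ => aux_integrable hp hρcont hρ1 (hpos2 _).le (hpos2 _).le)
    simpa using this
  have hsum : ∑ k ∈ Finset.range J, ∫ u in (s / 2 ^ (k + 2))..(s / 2 ^ (k + 1)), F u
      = ∫ u in (s / 2 ^ (J + 1))..(s / 2 ^ (0 + 1)), F u := by
    have h1 : ∀ k : ℕ, (∫ u in (s / 2 ^ (k + 2))..(s / 2 ^ (k + 1)), F u)
        = -(∫ u in (s / 2 ^ (k + 1))..(s / 2 ^ (k + 2)), F u) := fun k =>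
      (intervalIntegral.integral_symm _ _)
    simp only [h1, Finset.sum_neg_distrib, hadj]
    rw [intervalIntegral.integral_symm, neg_neg]
  have hFnonneg : ∀ u ∈ Set.Ici (0:ℝ), 0 ≤ F u := by
    intro u hu
    exact div_nonneg (Real.rpow_nonneg hu _) (le_trans zero_le_one (hρ1 u hu))
  -- the middle piece is at most the whole integral
  have hsplit : (∫ u in (0:ℝ)..s, F u)
      = (∫ u in (0:ℝ)..(s / 2 ^ (J + 1)), F u)
        + (∫ u in (s / 2 ^ (J + 1))..(s / 2 ^ (0 + 1)), F u)
        + (∫ u in (s / 2 ^ (0 + 1))..s, F u) := by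
    rw [intervalIntegral.integral_add_adjacent_intervals
      (aux_integrable hp hρcont hρ1 le_rfl (hpos2 _).le)
      (aux_integrable hp hρcont hρ1 (hpos2 _).le (hpos2 _).le)]
    rw [intervalIntegral.integral_add_adjacent_intervals
      (aux_integrable hp hρcont hρ1 le_rfl (hpos2 _).le)
      (aux_integrable hp hρcont hρ1 (hpos2 _).le hs.le)]
  have hJ1 : s / 2 ^ (J + 1) ≤ s / 2 ^ (0 + 1) := by
    apply div_le_div_of_nonneg_left hs.le (by positivity)
    exact pow_le_pow_right₀ (by norm_num) (by omega)
  have hnn1 : 0 ≤ ∫ u in (0:ℝ)..(s / 2 ^ (J + 1)), F u :=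
    intervalIntegral.integral_nonneg (hpos2 _).le
      (fun u hu => hFnonneg u hu.1)
  have hnn3 : 0 ≤ ∫ u in (s / 2 ^ (0 + 1))..s, F u :=
    intervalIntegral.integral_nonneg
      (by rw [pow_one]; linarith [half_le_self hs.le])
      (fun u hu => hFnonneg u (le_trans (hpos2 1).le hu.1))
  calc ∑ k ∈ Finset.range J, (s / 2 ^ (k + 2)) ^ p / ρ (s / 2 ^ (k + 1))
      ≤ ∑ k ∈ Finset.range J, ∫ u in (s / 2 ^ (k + 2))..(s / 2 ^ (k + 1)), F u :=
        Finset.sum_le_sum fun k _ => key k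
    _ = ∫ u in (s / 2 ^ (J + 1))..(s / 2 ^ (0 + 1)), F u := hsum
    _ ≤ ∫ u in (0:ℝ)..s, F u := by
        rw [hsplit]; linarith

end Integral

section Central

lemma aux_central {G : Type} [Group G] (S : Finset G)
    (hsymm : ∀ z ∈ S, z⁻¹ ∈ S) (hgen : Subgroup.closure (S : Set G) = ⊤)
    {p : ℝ} (hp : 1 ≤ p) {ρ : ℝ → ℝ} (hρmono : MonotoneOn ρ (Set.Ici 0))
    (hρcont : ContinuousOn ρ (Set.Ici 0)) (hρ1 : ∀ t ≥ (0:ℝ), 1 ≤ ρ t)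
    {φ : G → ℝ} (hφ0 : ∀ x, 0 ≤ φ x) (hφs : Summable φ)
    {K : ℝ} (hK : 0 < K)
    (hmom : ∀ t > (0:ℝ),
      t * ∑' x : G, ({x : G | t < ρ ((wordLength S x : ℝ))}).indicator φ x ≤ K)
    {f : G → ℝ} (hf : (Function.support f).Finite) (hnorm : ∑' x, |f x| ^ p = 1)
    {s : ℝ} (hs : 0 < s) :
    ∑' y, (∑' x, |f (x * y) - f x| ^ p) * φ y
      ≤ 2 ^ p * (K / ρ s)
        + 4 ^ p * K * (∫ u in (0:ℝ)..s, u ^ (p - 1) / ρ u)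
          * ∑ z ∈ S, ∑' x, |f (x * z) - f x| ^ p := by
  classical
  set g : G → ℝ := fun y => ∑' x, |f (x * y) - f x| ^ p with hg
  set T : ℝ := ∑ z ∈ S, g z with hTdef
  have hg0 : ∀ y, 0 ≤ g y := fun y => tsum_nonneg fun x => by positivity
  have hT0 : 0 ≤ T := Finset.sum_nonneg fun z _ => hg0 z
  have hg2 : ∀ y, g y ≤ 2 ^ p := fun y => aux_g_le_two_rpow hp hf hnorm y
  set wl : G → ℝ := fun y => ((wordLength S y : ℕ) : ℝ) with hwl
  -- choose the number of shells
  obtain ⟨J0, hJ0⟩ := pow_unbounded_of_one_lt s (by norm_num : (1:ℝ) < 2)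
  set Jn := J0 + 1 with hJn
  have hsmall : s / 2 ^ Jn < 1 := by
    rw [div_lt_one (by positivity)]
    calc s < 2 ^ J0 := hJ0
      _ ≤ 2 ^ Jn := by
        apply pow_le_pow_right₀ (by norm_num)
        omega
  -- regions
  set far : Set G := {y | s < wl y} with hfar
  set shell : ℕ → Set G := fun k => {y | s / 2 ^ (k + 1) < wl y ∧ wl y ≤ s / 2 ^ k} with hshell
  set c : ℕ → ℝ := fun k => (s / 2 ^ k) ^ p * T with hc
  have hc0 : ∀ k, 0 ≤ c k := fun k => mul_nonneg (Real.rpow_nonneg (by positivity) _) hT0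
  set B : G → ℝ := fun y => far.indicator (fun y => 2 ^ p * φ y) y
      + ∑ k ∈ Finset.range Jn, (shell k).indicator (fun y => c k * φ y) y with hB
  -- pointwise bound
  have hpoint : ∀ y, g y * φ y ≤ B y := by
    intro y
    have hind0 : ∀ (A : Set G) (c' : ℝ), 0 ≤ c' →
        0 ≤ A.indicator (fun y => c' * φ y) y := fun A c' hc' =>
      Set.indicator_nonneg (fun z _ => mul_nonneg hc' (hφ0 z)) y
    have hsum0 : 0 ≤ ∑ k ∈ Finset.range Jn, (shell k).indicator (fun y => c k * φ y) y :=
      Finset.sum_nonneg fun k _ => hind0 _ _ (hc0 k)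
    by_cases hyfar : s < wl y
    · have heq : far.indicator (fun y => 2 ^ p * φ y) y = 2 ^ p * φ y :=
        Set.indicator_of_mem (show y ∈ far from hyfar) _
      simp only [hB]
      calc g y * φ y ≤ 2 ^ p * φ y := mul_le_mul_of_nonneg_right (hg2 y) (hφ0 y)
        _ ≤ _ := by rw [heq]; linarith
    · push_neg at hyfar
      have hfar0 : far.indicator (fun y => 2 ^ p * φ y) y = 0 :=
        Set.indicator_of_notMem (by simpa [hfar] using not_lt.mpr hyfar) _
      by_cases hy1 : y = 1
      · have : g y = 0 := by
          rw [hg, hy1]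
          simp only [mul_one, sub_self, abs_zero]
          rw [Real.zero_rpow (by positivity), tsum_zero]
        rw [this, zero_mul]
        simp only [hB]
        rw [hfar0, zero_add]
        exact hsum0
      · -- y in some shell
        have hwl1 : (1:ℝ) ≤ wl y := by
          have h := aux_wordLength_pos S hsymm hgen hy1
          simp only [hwl]
          exact_mod_cast h
        have hex : ∃ k, s / 2 ^ (k + 1) < wl y := by
          refine ⟨Jn - 1, ?_⟩
          have : (Jn - 1) + 1 = Jn := by omega
          rw [this]
          linarith
        set k₀ := Nat.find hex with hk₀def
        have hk₀ : s / 2 ^ (k₀ + 1) < wl y := Nat.find_spec hex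
        have hk₀le : k₀ < Jn := by
          have h1 : k₀ ≤ Jn - 1 := Nat.find_min' hex (by
            have : (Jn - 1) + 1 = Jn := by omega
            rw [this]
            linarith)
          omega
        have hup : wl y ≤ s / 2 ^ k₀ := by
          rcases Nat.eq_zero_or_pos k₀ with h0 | hpos
          · rw [h0]
            simpa using hyfar
          · have hmin := Nat.find_min hex (m := k₀ - 1) (by omega)
            push_neg at hmin
            have : (k₀ - 1) + 1 = k₀ := by omega
            rwa [this] at hmin
        have hmem : y ∈ shell k₀ := ⟨hk₀, hup⟩
        -- telescoping bound
        have hgy : g y ≤ (s / 2 ^ k₀) ^ p * T := by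
          obtain ⟨l, hl, hlen, hprod⟩ := aux_exists_min_word S hsymm hgen y
          have h1 : g y ≤ (l.length : ℝ) ^ p * T := by
            rw [hg, ← hprod]
            exact aux_g_telescope hp hf S l hl
          refine h1.trans ?_
          apply mul_le_mul_of_nonneg_right _ hT0
          apply Real.rpow_le_rpow (Nat.cast_nonneg _) _ (by linarith)
          rw [hlen]
          exact hup
        have hyk : (shell k₀).indicator (fun y => c k₀ * φ y) y = c k₀ * φ y :=
          Set.indicator_of_mem hmem _
        simp only [hB]
        rw [hfar0, zero_add]
        calc g y * φ y ≤ c k₀ * φ y := by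
              simp only [hc]
              exact mul_le_mul_of_nonneg_right hgy (hφ0 y)
          _ = (shell k₀).indicator (fun y => c k₀ * φ y) y := hyk.symm
          _ ≤ _ := Finset.single_le_sum
              (f := fun k => (shell k).indicator (fun y => c k * φ y) y)
              (fun k _ => hind0 _ _ (hc0 k)) (Finset.mem_range.mpr hk₀le)
  -- summability
  have hhs : Summable (fun y => g y * φ y) := by
    refine (hφs.mul_left ((2:ℝ) ^ p)).of_nonneg_of_le
      (fun y => mul_nonneg (hg0 y) (hφ0 y)) (fun y => ?_)
    exact mul_le_mul_of_nonneg_right (hg2 y) (hφ0 y)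
  have hBsum1 : Summable (far.indicator (fun y => 2 ^ p * φ y)) :=
    (hφs.mul_left _).indicator far
  have hBsumk : ∀ k : ℕ, Summable ((shell k).indicator (fun y => c k * φ y)) :=
    fun k => (hφs.mul_left _).indicator _
  have hBsum : Summable B := by
    rw [hB]
    exact hBsum1.add (summable_sum (fun k _ => hBsumk k))
  -- tail bounds
  have htail : ∀ a : ℝ, 0 < a →
      ∑' y : G, ({y : G | a < wl y}).indicator φ y ≤ K / ρ a := by
    intro a ha
    exact aux_tail_mass S hρmono hρ1 hφ0 hφs hK hmom ha
  -- far term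
  have hfarbound : ∑' y, far.indicator (fun y => 2 ^ p * φ y) y ≤ 2 ^ p * (K / ρ s) := by
    have heq : ∀ y, far.indicator (fun y => 2 ^ p * φ y) y = 2 ^ p * far.indicator φ y :=
      fun y => Set.indicator_const_mul far φ _ y
    rw [tsum_congr heq, tsum_mul_left]
    apply mul_le_mul_of_nonneg_left _ (Real.rpow_nonneg (by norm_num) _)
    exact htail s hs
  -- shell terms
  have hshellbound : ∀ k : ℕ,
      ∑' y, (shell k).indicator (fun y => c k * φ y) y ≤ c k * (K / ρ (s / 2 ^ (k + 1))) := by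
    intro k
    have heq : ∀ y, (shell k).indicator (fun y => c k * φ y) y
        = c k * (shell k).indicator φ y :=
      fun y => Set.indicator_const_mul _ φ _ y
    rw [tsum_congr heq, tsum_mul_left]
    apply mul_le_mul_of_nonneg_left _ (hc0 k)
    have hsub : shell k ⊆ {y : G | s / 2 ^ (k + 1) < wl y} := fun y hy => hy.1
    have h1 := Summable.tsum_le_tsum
      (Set.indicator_le_indicator_of_subset hsub (fun y => hφ0 y))
      (hφs.indicator _) (hφs.indicator _)
    exact h1.trans (htail _ (by positivity))
  -- put everything together
  have hmain := Summable.tsum_le_tsum hpoint hhs hBsum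
  refine hmain.trans ?_
  have hsplit : ∑' y, B y
      = (∑' y, far.indicator (fun y => 2 ^ p * φ y) y)
        + ∑ k ∈ Finset.range Jn, ∑' y, (shell k).indicator (fun y => c k * φ y) y := by
    rw [hB, Summable.tsum_add hBsum1 (summable_sum (fun k _ => hBsumk k))]
    rw [Summable.tsum_finsetSum (fun k _ => hBsumk k)]
  rw [hsplit]
  have hgeom : ∑ k ∈ Finset.range Jn, c k * (K / ρ (s / 2 ^ (k + 1)))
      ≤ 4 ^ p * K * (∫ u in (0:ℝ)..s, u ^ (p - 1) / ρ u) * T := by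
    have hterm : ∀ k : ℕ, c k * (K / ρ (s / 2 ^ (k + 1)))
        = 4 ^ p * K * ((s / 2 ^ (k + 2)) ^ p / ρ (s / 2 ^ (k + 1))) * T := by
      intro k
      have h4 : (s / 2 ^ k) ^ p = 4 ^ p * (s / 2 ^ (k + 2)) ^ p := by
        rw [← Real.mul_rpow (by norm_num) (by positivity)]
        congr 1
        rw [pow_succ, pow_succ]
        field_simp
        ring
      simp only [hc]
      rw [h4]
      ring
    rw [Finset.sum_congr rfl (fun k _ => hterm k), ← Finset.sum_mul, ← Finset.mul_sum]
    apply mul_le_mul_of_nonneg_right _ hT0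
    apply mul_le_mul_of_nonneg_left _ (by positivity)
    exact aux_geom_sum_le hp hρcont hρ1 hs hρmono Jn
  have hshellsum : ∑ k ∈ Finset.range Jn, ∑' y, (shell k).indicator (fun y => c k * φ y) y
      ≤ 4 ^ p * K * (∫ u in (0:ℝ)..s, u ^ (p - 1) / ρ u) * T :=
    le_trans (Finset.sum_le_sum fun k _ => hshellbound k) hgeom
  linarith [hfarbound, hshellsum]

end Central

lemma aux_lambda_nonneg {G : Type} [Group G] (p : ℝ) (μ : G → ℝ) (hμ0 : ∀ y, 0 ≤ μ y)
    (v : ℝ) : 0 ≤ lambdaP p μ v := by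
  rw [lambdaP]
  apply Real.sInf_nonneg
  rintro E ⟨f, hf, hc, hn, rfl⟩
  have h : 0 ≤ ∑' x : G, ∑' y : G, |f (x * y) - f x| ^ p * μ y :=
    tsum_nonneg fun x => tsum_nonneg fun y =>
      mul_nonneg (Real.rpow_nonneg (abs_nonneg _) _) (hμ0 y)
  linarith

/-- Comparison of isoperimetric profiles under a weak moment condition:
there is `C = C(p,ρ) > 0` such that for every group, generating set, `φ` with
`W(ρ,φ) ≤ K`, all `v > 0` and `s > 0`,
`Λ_{p,φ}(v) ≤ C·K·(1/ρ(s) + |S|·s^p/M_{p,ρ}(s) · Λ_{p,u}(v))`,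
where `M_{p,ρ}(s) = s^p / ∫₀^s u^{p−1}/ρ(u) du`. -/
theorem profile_comparison_weak_moment
    (p : ℝ) (hp : 1 ≤ p) (ρ : ℝ → ℝ) (hρmono : MonotoneOn ρ (Set.Ici 0))
    (hρcont : ContinuousOn ρ (Set.Ici 0)) (hρ1 : ∀ t ≥ (0:ℝ), 1 ≤ ρ t) :
    ∃ C > (0:ℝ), ∀ (G : Type) [Group G] [DecidableEq G] (S : Finset G),
      (1 : G) ∈ S → (∀ s ∈ S, s⁻¹ ∈ S) → Subgroup.closure (S : Set G) = ⊤ →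
      ∀ (φ : G → ℝ), IsSymProb φ → ∀ K > (0:ℝ),
      (∀ t > (0:ℝ),
        t * ∑' x : G, ({x : G | t < ρ ((wordLength S x : ℝ))}).indicator φ x ≤ K) →
      ∀ v > (0:ℝ), ∀ s > (0:ℝ),
      lambdaP p φ v ≤
        C * K * (1 / ρ s +
          (S.card : ℝ) * s ^ p / (s ^ p / ∫ u in (0:ℝ)..s, u ^ (p - 1) / ρ u) *
            lambdaP p (unifS S) v) := by
  refine ⟨4 ^ p, Real.rpow_pos_of_pos (by norm_num) p, ?_⟩
  intro G _ _ S hS1 hsymm hgen φ hφprob K hK hmom v hv s hs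
  obtain ⟨hφ0, hφ1, hφsym⟩ := hφprob
  have hφs : Summable φ := by
    by_contra h
    rw [tsum_eq_zero_of_not_summable h] at hφ1
    norm_num at hφ1
  have hcard : (0:ℝ) < S.card := by
    exact_mod_cast Finset.card_pos.mpr ⟨1, hS1⟩
  set I := ∫ u in (0:ℝ)..s, u ^ (p - 1) / ρ u with hI
  have hIpos : 0 < I := aux_I_pos hp hρcont hρ1 hs
  have hsp : (0:ℝ) < s ^ p := Real.rpow_pos_of_pos hs p
  have hcoef : (S.card : ℝ) * s ^ p / (s ^ p / I) = (S.card : ℝ) * I := by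
    rw [div_div_eq_mul_div]
    field_simp
  have hρs : 0 < ρ s := lt_of_lt_of_le one_pos (hρ1 s hs.le)
  have h4p : (0:ℝ) < 4 ^ p := Real.rpow_pos_of_pos (by norm_num) p
  have h24 : (2:ℝ) ^ p ≤ 4 ^ p :=
    Real.rpow_le_rpow (by norm_num) (by norm_num) (by linarith)
  have hu0 : ∀ y, 0 ≤ unifS S y := fun y => by
    simp only [unifS]
    split <;> positivity
  have hus : Summable (unifS S) := by
    refine summable_of_ne_finset_zero (s := S) (fun y hy => ?_)
    simp [unifS, hy]
  have hΛu0 : 0 ≤ lambdaP p (unifS S) v := aux_lambda_nonneg p (unifS S) hu0 v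
  have hbddφ : BddBelow {E : ℝ | ∃ f : G → ℝ, (Function.support f).Finite ∧
      ((Function.support f).ncard : ℝ) ≤ v ∧ (∑' x, |f x| ^ p) = 1 ∧
      E = (1 / 2) * ∑' x : G, ∑' y : G, |f (x * y) - f x| ^ p * φ y} := by
    refine ⟨0, ?_⟩
    rintro E ⟨f, hf, hc, hn, rfl⟩
    have h : 0 ≤ ∑' x : G, ∑' y : G, |f (x * y) - f x| ^ p * φ y :=
      tsum_nonneg fun x => tsum_nonneg fun y =>
        mul_nonneg (Real.rpow_nonneg (abs_nonneg _) _) (hφ0 y)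
    linarith
  rcases Set.eq_empty_or_nonempty {E : ℝ | ∃ f : G → ℝ, (Function.support f).Finite ∧
      ((Function.support f).ncard : ℝ) ≤ v ∧ (∑' x, |f x| ^ p) = 1 ∧
      E = (1 / 2) * ∑' x : G, ∑' y : G, |f (x * y) - f x| ^ p * φ y} with hemp | hne
  · rw [lambdaP, hemp, Real.sInf_empty]
    rw [hcoef]
    apply mul_nonneg (mul_nonneg h4p.le hK.le)
    apply add_nonneg (by positivity)
    exact mul_nonneg (mul_nonneg hcard.le hIpos.le) hΛu0
  · obtain ⟨E0, f0, hf0, hc0, hn0, _⟩ := hne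
    have hneu : {E : ℝ | ∃ f : G → ℝ, (Function.support f).Finite ∧
        ((Function.support f).ncard : ℝ) ≤ v ∧ (∑' x, |f x| ^ p) = 1 ∧
        E = (1 / 2) * ∑' x : G, ∑' y : G, |f (x * y) - f x| ^ p * unifS S y}.Nonempty :=
      ⟨_, f0, hf0, hc0, hn0, rfl⟩
    apply le_of_forall_pos_le_add
    intro ε hε
    set D := 4 ^ p * K * ((S.card : ℝ) * I) with hD
    have hD0 : 0 ≤ D :=
      mul_nonneg (mul_nonneg h4p.le hK.le) (mul_nonneg hcard.le hIpos.le)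
    set ε' := ε / (D + 1) with hε'
    have hε'0 : 0 < ε' := div_pos hε (by linarith)
    obtain ⟨Ev, hEvmem, hEvlt⟩ := Real.lt_sInf_add_pos hneu hε'0
    obtain ⟨f, hff, hfc, hfn, hEv⟩ := hEvmem
    have hΛEv : Ev < lambdaP p (unifS S) v + ε' := by
      rw [lambdaP]
      exact hEvlt
    have hswapu : ∑' (x : G), ∑' (y : G), |f (x * y) - f x| ^ p * unifS S y
        = ∑' y, (∑' x, |f (x * y) - f x| ^ p) * unifS S y :=
      aux_energy_swap hp hff hu0 hus
    set T := ∑ z ∈ S, ∑' x, |f (x * z) - f x| ^ p with hT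
    have hTval : ∑' y, (∑' x, |f (x * y) - f x| ^ p) * unifS S y = T * ((S.card : ℝ))⁻¹ := by
      rw [tsum_eq_sum (s := S) (fun y hy => by simp [unifS, hy])]
      rw [hT, Finset.sum_mul]
      refine Finset.sum_congr rfl fun z hz => ?_
      simp [unifS, hz]
    have hTEv : T = 2 * (S.card : ℝ) * Ev := by
      rw [hEv, hswapu, hTval]
      field_simp
    have hle : lambdaP p φ v
        ≤ (1 / 2) * ∑' (x : G), ∑' (y : G), |f (x * y) - f x| ^ p * φ y := by
      rw [lambdaP]
      exact csInf_le hbddφ ⟨f, hff, hfc, hfn, rfl⟩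
    have hswapφ : ∑' (x : G), ∑' (y : G), |f (x * y) - f x| ^ p * φ y
        = ∑' y, (∑' x, |f (x * y) - f x| ^ p) * φ y :=
      aux_energy_swap hp hff hφ0 hφs
    have hcent := aux_central S hsymm hgen hp hρmono hρcont hρ1 hφ0 hφs hK hmom hff hfn hs
    rw [← hI, ← hT] at hcent
    have hT0 : 0 ≤ T := Finset.sum_nonneg fun z _ => tsum_nonneg fun x => by positivity
    have hEv0 : 0 ≤ Ev := by nlinarith
    have hDε : D * ε' ≤ ε := by
      have h1 : D / (D + 1) ≤ 1 := by
        rw [div_le_one (by linarith)]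
        linarith
      calc D * ε' = ε * (D / (D + 1)) := by rw [hε']; ring
        _ ≤ ε * 1 := mul_le_mul_of_nonneg_left h1 hε.le
        _ = ε := mul_one ε
    have e1 : (1 / 2) * (2 ^ p * (K / ρ s)) ≤ 4 ^ p * K * (1 / ρ s) := by
      have h2 : (0:ℝ) ≤ K / ρ s := div_nonneg hK.le hρs.le
      have h2p0 : (0:ℝ) < 2 ^ p := Real.rpow_pos_of_pos (by norm_num) p
      have h3 : (1 / 2 : ℝ) * 2 ^ p ≤ 4 ^ p := by linarith
      calc (1 / 2) * (2 ^ p * (K / ρ s)) = ((1 / 2) * 2 ^ p) * (K / ρ s) := by ring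
        _ ≤ 4 ^ p * (K / ρ s) := mul_le_mul_of_nonneg_right h3 h2
        _ = 4 ^ p * K * (1 / ρ s) := by ring
    have e2 : 4 ^ p * K * ((S.card : ℝ) * I) * Ev
        ≤ D * (lambdaP p (unifS S) v + ε') := by
      rw [hD]
      exact mul_le_mul_of_nonneg_left hΛEv.le hD0
    calc lambdaP p φ v
        ≤ (1 / 2) * ∑' (x : G), ∑' (y : G), |f (x * y) - f x| ^ p * φ y := hle
      _ = (1 / 2) * ∑' y, (∑' x, |f (x * y) - f x| ^ p) * φ y := by rw [hswapφ]
      _ ≤ (1 / 2) * (2 ^ p * (K / ρ s) + 4 ^ p * K * I * T) :=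
          mul_le_mul_of_nonneg_left hcent (by norm_num)
      _ = (1 / 2) * (2 ^ p * (K / ρ s)) + 4 ^ p * K * ((S.card : ℝ) * I) * Ev := by
          rw [hTEv]; ring
      _ ≤ 4 ^ p * K * (1 / ρ s) + D * (lambdaP p (unifS S) v + ε') := by
          linarith
      _ = 4 ^ p * K * (1 / ρ s + (S.card : ℝ) * I * lambdaP p (unifS S) v) + D * ε' := by
          rw [hD]; ring
      _ ≤ 4 ^ p * K * (1 / ρ s + (S.card : ℝ) * s ^ p / (s ^ p / I) * lambdaP p (unifS S) v)
            + ε := by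
          rw [hcoef]
          linarith
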